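/- Let A be an n×n real matrix, B an n×m real matrix, Q an n×n real symmetric positive definite matrix, R an m×m real symmetric positive definite matrix, and K an m×n real matrix such that Φ = A + BK has spectral radius strictly less than 1. Let P be an n×n real symmetric matrix satisfying the Lyapunov equation P = ΦᵀPΦ + Q + KᵀRK, and assume the LQR optimality condition BᵀPΦ + RK = 0. Fix N ∈ ℕ, an initial state x ∈ ℝⁿ and vectors c_0, …, c_{N−1} ∈ ℝᵐ, and set c_l = 0 for l ≥ N. Define z_0 = x, z_{l+1} = Φ z_l + B c_l, and v_l = K z_l + c_l for all l ≥ 0. Then the series Σ_{l=0}^∞ (z_lᵀ Q z_l + v_lᵀ R v_l) converges and equals Σ_{l=0}^{N−1} c_lᵀ (R + BᵀPB) c_l + xᵀ P x. -/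

import Mathlib

open Matrix Filter
open scoped ENNReal NNReal

attribute [local instance] Matrix.linftyOpNormedRing Matrix.linftyOpNormedAlgebra

private lemma aux_mulVec_dot {n m : ℕ} (M : Matrix (Fin n) (Fin m) ℝ) (w : Fin m → ℝ)
    (u : Fin n → ℝ) : (M *ᵥ w) ⬝ᵥ u = w ⬝ᵥ (Mᵀ *ᵥ u) := by
  rw [dotProduct_comm, dotProduct_mulVec, dotProduct_comm, ← mulVec_transpose]

private lemma aux_key {n m : ℕ} (Φ : Matrix (Fin n) (Fin n) ℝ) (B : Matrix (Fin n) (Fin m) ℝ)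
    (Q P : Matrix (Fin n) (Fin n) ℝ) (R : Matrix (Fin m) (Fin m) ℝ)
    (K : Matrix (Fin m) (Fin n) ℝ)
    (hM1 : Φᵀ * P * Φ = P - Q - Kᵀ * R * K)
    (h1 : Bᵀ * P * Φ = -(R * K))
    (h2 : Φᵀ * P * B = -(Kᵀ * R))
    (w : Fin n → ℝ) (d : Fin m → ℝ) :
    w ⬝ᵥ Q *ᵥ w + (K *ᵥ w + d) ⬝ᵥ R *ᵥ (K *ᵥ w + d)
      + (Φ *ᵥ w + B *ᵥ d) ⬝ᵥ P *ᵥ (Φ *ᵥ w + B *ᵥ d)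
    = w ⬝ᵥ P *ᵥ w + d ⬝ᵥ ((R + Bᵀ * P * B) *ᵥ d) := by
  simp only [mulVec_add, dotProduct_add, add_dotProduct, aux_mulVec_dot, mulVec_mulVec,
    add_mulVec, ← Matrix.mul_assoc]
  rw [hM1, h1, h2]
  simp only [sub_mulVec, neg_mulVec, dotProduct_sub, dotProduct_neg]
  ring

private lemma aux_pow_tendsto {n : ℕ} (M : Matrix (Fin n) (Fin n) ℂ)
    (h : ∀ z ∈ spectrum ℂ M, ‖z‖ < 1) :
    Tendsto (fun k : ℕ => ‖M ^ k‖) atTop (nhds 0) := by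
  have hρ : spectralRadius ℂ M < 1 := by
    rw [spectralRadius]
    by_cases hne : (spectrum ℂ M).Nonempty
    · obtain ⟨k₀, hk₀, hmax⟩ := Finset.exists_max_image (Matrix.finite_spectrum M).toFinset
        (fun z => ‖z‖₊) (by simpa using hne)
      rw [Set.Finite.mem_toFinset] at hk₀
      calc (⨆ k ∈ spectrum ℂ M, (‖k‖₊ : ℝ≥0∞)) ≤ (‖k₀‖₊ : ℝ≥0∞) := by
            refine iSup₂_le fun k hk => ?_
            exact_mod_cast hmax k ((Matrix.finite_spectrum M).mem_toFinset.mpr hk)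
        _ < 1 := by
            rw [ENNReal.coe_lt_one_iff, ← NNReal.coe_lt_one, coe_nnnorm]
            exact h k₀ hk₀
    · rw [Set.not_nonempty_iff_eq_empty] at hne
      simp [hne]
  obtain ⟨r, hr1, hρr⟩ := ENNReal.lt_iff_exists_nnreal_btwn.mp hρ
  have hgel := spectrum.pow_nnnorm_pow_one_div_tendsto_nhds_spectralRadius M
  have hev : ∀ᶠ k : ℕ in atTop, (‖M ^ k‖₊ : ℝ≥0∞) ^ (1 / (k:ℝ)) < (r : ℝ≥0∞) :=
    hgel.eventually_lt_const hr1
  have hbd : ∀ᶠ k : ℕ in atTop, ‖M ^ k‖ ≤ (r:ℝ) ^ k := by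
    filter_upwards [hev, eventually_ge_atTop 1] with k hk hk1
    have hk0 : (k:ℝ) ≠ 0 := Nat.cast_ne_zero.mpr (by omega)
    have h2 := ENNReal.rpow_lt_rpow hk (by positivity : (0:ℝ) < (k:ℝ))
    rw [← ENNReal.rpow_mul, one_div, inv_mul_cancel₀ hk0, ENNReal.rpow_one,
      ENNReal.rpow_natCast, ← ENNReal.coe_pow, ENNReal.coe_lt_coe] at h2
    have := h2.le
    rw [← NNReal.coe_le_coe, coe_nnnorm] at this
    simpa using this
  have hr1' : (r:ℝ) < 1 := by exact_mod_cast hρr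
  exact squeeze_zero' (Eventually.of_forall fun k => norm_nonneg _) hbd
    (tendsto_pow_atTop_nhds_zero_of_lt_one r.coe_nonneg hr1')

/-- the infinite-horizon cost identity (13)/(A.3): with an LQR-optimal terminal
feedback `K` for the Schur-stable closed loop `Φ = A + BK`, the infinite-horizon nominal cost
`Σ_l (zₗᵀQzₗ + vₗᵀRvₗ)` equals `Σ_{l<N} cₗᵀ(R + BᵀPB)cₗ + xᵀPx`. -/
theorem infinite_horizon_cost_identity {n m : ℕ}
    (A : Matrix (Fin n) (Fin n) ℝ) (B : Matrix (Fin n) (Fin m) ℝ)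
    (Q : Matrix (Fin n) (Fin n) ℝ) (R : Matrix (Fin m) (Fin m) ℝ)
    (K : Matrix (Fin m) (Fin n) ℝ) (P : Matrix (Fin n) (Fin n) ℝ)
    (hQ : Q.PosDef) (hR : R.PosDef) (hP : P.IsSymm)
    (hΦ : ∀ z ∈ spectrum ℂ ((A + B * K).map (algebraMap ℝ ℂ)), ‖z‖ < 1)
    (hLyap : P = (A + B * K)ᵀ * P * (A + B * K) + Q + Kᵀ * R * K)
    (hLQR : Bᵀ * P * (A + B * K) + R * K = 0)
    (N : ℕ) (x : Fin n → ℝ) (c : ℕ → Fin m → ℝ) (hc : ∀ l, N ≤ l → c l = 0)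
    (z : ℕ → Fin n → ℝ) (v : ℕ → Fin m → ℝ)
    (hz0 : z 0 = x)
    (hz : ∀ l, z (l + 1) = (A + B * K) *ᵥ z l + B *ᵥ c l)
    (hv : ∀ l, v l = K *ᵥ z l + c l) :
    HasSum (fun l : ℕ => z l ⬝ᵥ (Q *ᵥ z l) + v l ⬝ᵥ (R *ᵥ v l))
      ((∑ l ∈ Finset.range N, c l ⬝ᵥ ((R + Bᵀ * P * B) *ᵥ c l)) + x ⬝ᵥ (P *ᵥ x)) := by
  set Φ := A + B * K with hΦdef
  have hPs : Pᵀ = P := hP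
  have hRs : Rᵀ = R := hR.1
  have h1 : Bᵀ * P * Φ = -(R * K) := eq_neg_of_add_eq_zero_left hLQR
  have h2 : Φᵀ * P * B = -(Kᵀ * R) := by
    have h := congrArg Matrix.transpose h1
    simpa [Matrix.transpose_mul, Matrix.mul_assoc, hPs, hRs] using h
  have hM1 : Φᵀ * P * Φ = P - Q - Kᵀ * R * K := by
    conv_rhs => rw [hLyap]
    abel
  have hstep : ∀ l, z l ⬝ᵥ Q *ᵥ z l + v l ⬝ᵥ R *ᵥ v l
      = (z l ⬝ᵥ P *ᵥ z l - z (l+1) ⬝ᵥ P *ᵥ z (l+1)) + c l ⬝ᵥ ((R + Bᵀ * P * B) *ᵥ c l) := by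
    intro l
    rw [hv, hz]
    have := aux_key Φ B Q P R K hM1 h1 h2 (z l) (c l)
    linarith
  have hpartial : ∀ M : ℕ, ∑ l ∈ Finset.range M, (z l ⬝ᵥ Q *ᵥ z l + v l ⬝ᵥ R *ᵥ v l)
      = (∑ l ∈ Finset.range M, c l ⬝ᵥ ((R + Bᵀ * P * B) *ᵥ c l))
        + x ⬝ᵥ P *ᵥ x - z M ⬝ᵥ P *ᵥ z M := by
    intro M
    induction M with
    | zero => simp [hz0]
    | succ M ih =>
      rw [Finset.sum_range_succ, ih, hstep, Finset.sum_range_succ]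
      ring
  have hzN : ∀ k, z (N + k) = (Φ ^ k) *ᵥ z N := by
    intro k
    induction k with
    | zero => simp
    | succ k ih =>
      have : N + (k + 1) = (N + k) + 1 := by omega
      rw [this, hz, ih, hc (N + k) (by omega)]
      simp [mulVec_mulVec, pow_succ']
  -- complexification and convergence of powers
  set f := algebraMap ℝ ℂ
  set Mc := Φ.map f with hMc
  have hnorm : Tendsto (fun k : ℕ => ‖Mc ^ k‖) atTop (nhds 0) := aux_pow_tendsto Mc hΦ
  set wc : Fin n → ℂ := f ∘ z N with hwc
  have hw : ∀ k i, f (z (N + k) i) = ((Mc ^ k) *ᵥ wc) i := by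
    intro k i
    have hmap : Mc ^ k = (Φ ^ k).map f := by
      rw [hMc, ← RingHom.mapMatrix_apply, ← map_pow, RingHom.mapMatrix_apply]
    rw [hzN, hmap, ← RingHom.map_mulVec]
  have htend0 : Tendsto (fun k => z (N + k)) atTop (nhds 0) := by
    rw [tendsto_pi_nhds]
    intro i
    have hb : ∀ k, ‖z (N + k) i‖ ≤ ‖Mc ^ k‖ * ‖wc‖ := by
      intro k
      have he : ‖z (N + k) i‖ = ‖((Mc ^ k) *ᵥ wc) i‖ := by
        rw [← hw]
        simp [f, Real.norm_eq_abs]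
      rw [he]
      exact le_trans (norm_le_pi_norm _ i) (Matrix.linfty_opNorm_mulVec _ _)
    have hlim : Tendsto (fun k : ℕ => ‖Mc ^ k‖ * ‖wc‖) atTop (nhds 0) := by
      simpa using hnorm.mul_const ‖wc‖
    simpa using squeeze_zero_norm hb hlim
  have hztend : Tendsto z atTop (nhds 0) := by
    rw [← Filter.tendsto_add_atTop_iff_nat N]
    simpa [Nat.add_comm] using htend0
  have hcont : Continuous fun w : Fin n → ℝ => w ⬝ᵥ P *ᵥ w := by
    unfold dotProduct mulVec
    exact continuous_finset_sum _ fun i _ =>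
      (continuous_apply i).mul (continuous_finset_sum _ fun j _ =>
        (continuous_const.mul (continuous_apply j)))
  have hq0 : Tendsto (fun M => z M ⬝ᵥ P *ᵥ z M) atTop (nhds 0) := by
    have := (hcont.tendsto 0).comp hztend
    simpa [Function.comp_def] using this
  have hnn : ∀ l, 0 ≤ z l ⬝ᵥ Q *ᵥ z l + v l ⬝ᵥ R *ᵥ v l := fun l =>
    add_nonneg (by simpa using hQ.posSemidef.dotProduct_mulVec_nonneg (z l)) (by simpa using hR.posSemidef.dotProduct_mulVec_nonneg (v l))
  have hcsum : ∀ M, N ≤ M → (∑ l ∈ Finset.range M, c l ⬝ᵥ ((R + Bᵀ * P * B) *ᵥ c l))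
      = ∑ l ∈ Finset.range N, c l ⬝ᵥ ((R + Bᵀ * P * B) *ᵥ c l) := by
    intro M hM
    refine (Finset.sum_subset (Finset.range_subset_range.mpr hM) ?_).symm
    intro l _ hl
    rw [hc l (by simpa using hl)]
    simp
  rw [hasSum_iff_tendsto_nat_of_nonneg hnn]
  have hlim : Tendsto (fun M => (∑ l ∈ Finset.range N, c l ⬝ᵥ ((R + Bᵀ * P * B) *ᵥ c l))
      + x ⬝ᵥ P *ᵥ x - z M ⬝ᵥ P *ᵥ z M) atTop
      (nhds ((∑ l ∈ Finset.range N, c l ⬝ᵥ ((R + Bᵀ * P * B) *ᵥ c l)) + x ⬝ᵥ P *ᵥ x)) := by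
    simpa using (tendsto_const_nhds.sub hq0)
  refine Tendsto.congr' ?_ hlim
  filter_upwards [eventually_ge_atTop N] with M hM
  rw [hpartial M, hcsum M hM]
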